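/- For every s ≥ 0, the normalizing constant of the matrix Fisher distribution with parameter sI₃ is c(sI₃) = ∫_{SO(3)} exp(s · tr(R)) dR = (e^s/π) ∫₀^π exp(2s cos ρ)(1 − cos ρ) dρ; equivalently, c(sI₃) = e^s (I₀(2s) − I₁(2s)). -/

import Mathlib

open MeasureTheory Matrix Real Filter
set_option maxHeartbeats 1000000

noncomputable section

/-- The space of real 3×3 matrices. -/
abbrev M3 : Type := Matrix (Fin 3) (Fin 3) ℝ

instance : MeasurableSpace M3 := inferInstanceAs (MeasurableSpace (Fin 3 → Fin 3 → ℝ))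

/-- The special orthogonal group SO(3), as a set of real 3×3 matrices. -/
def SO3 : Set M3 := {R | Rᵀ * R = 1 ∧ R.det = 1}

/-- The normalizing constant of the matrix Fisher distribution,
`c(F) = ∫_{SO(3)} exp(tr(Fᵀ R)) dR`. -/
noncomputable def mfC (μ : Measure M3) (F : M3) : ℝ :=
  ∫ R, Real.exp (Fᵀ * R).trace ∂μ

/-- The modified Bessel function of the first kind of order zero,
`I₀(x) = (1/π) ∫₀^π exp(x cos θ) dθ`. -/
noncomputable def besselI0 (x : ℝ) : ℝ :=
  (1 / Real.pi) * ∫ θ in (0:ℝ)..Real.pi, Real.exp (x * Real.cos θ)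

/-- The modified Bessel function of the first kind of order one,
`I₁(x) = (1/π) ∫₀^π cos θ · exp(x cos θ) dθ`. -/
noncomputable def besselI1 (x : ℝ) : ℝ :=
  (1 / Real.pi) * ∫ θ in (0:ℝ)..Real.pi, Real.cos θ * Real.exp (x * Real.cos θ)

instance : BorelSpace M3 := inferInstanceAs (BorelSpace (Fin 3 → Fin 3 → ℝ))

lemma so3_col (R : M3) (h : R ∈ SO3) (k : Fin 3) :
    R 0 k ^2 + R 1 k ^2 + R 2 k ^2 = 1 := by
  have := congrFun (congrFun h.1 k) k
  simp [Matrix.mul_apply, Fin.sum_univ_three, Matrix.one_apply] at this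
  nlinarith [this]

lemma so3_adj (R : M3) (h : R ∈ SO3) : Rᵀ = adjugate R := by
  have h2 : R * Rᵀ = 1 := (mul_eq_one_comm).mp h.1
  have h3 : R * adjugate R = 1 := by rw [Matrix.mul_adjugate, h.2]; simp
  calc Rᵀ = Rᵀ * (R * adjugate R) := by rw [h3, mul_one]
    _ = (Rᵀ * R) * adjugate R := by rw [mul_assoc]
    _ = adjugate R := by rw [h.1, one_mul]

lemma so3_diag0 (R : M3) (h : R ∈ SO3) : R 0 0 = R 1 1 * R 2 2 - R 1 2 * R 2 1 := by
  have := congrFun (congrFun (so3_adj R h) 0) 0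
  simpa [Matrix.adjugate_fin_three] using this

lemma so3_diag1 (R : M3) (h : R ∈ SO3) : R 1 1 = R 0 0 * R 2 2 - R 0 2 * R 2 0 := by
  have := congrFun (congrFun (so3_adj R h) 1) 1
  simpa [Matrix.adjugate_fin_three] using this

lemma so3_diag2 (R : M3) (h : R ∈ SO3) : R 2 2 = R 0 0 * R 1 1 - R 0 1 * R 1 0 := by
  have := congrFun (congrFun (so3_adj R h) 2) 2
  simpa [Matrix.adjugate_fin_three] using this

lemma trace_eq (R : M3) : R.trace = R 0 0 + R 1 1 + R 2 2 := by
  simp [Matrix.trace, Fin.sum_univ_three, Matrix.diag]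

lemma so3_key (R : M3) (h : R ∈ SO3) :
    (R 0 1 - R 1 0)^2 + (R 0 2 - R 2 0)^2 + (R 1 2 - R 2 1)^2
      = 3 + 2*R.trace - R.trace^2 := by
  have e0 := so3_col R h 0
  have e1 := so3_col R h 1
  have e2 := so3_col R h 2
  have d0 := so3_diag0 R h
  have d1 := so3_diag1 R h
  have d2 := so3_diag2 R h
  rw [trace_eq]
  nlinarith [e0, e1, e2, d0, d1, d2]

lemma so3_entry_bound (R : M3) (h : R ∈ SO3) (j k : Fin 3) : |R j k| ≤ 1 := by
  have := so3_col R h k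
  have h2 : R j k ^ 2 ≤ 1 := by
    fin_cases j <;> simp only [Fin.isValue, Fin.zero_eta, Fin.mk_one, Fin.reduceFinMk] <;> nlinarith [this]
  nlinarith [abs_nonneg (R j k), sq_abs (R j k)]

def rotX (u : ℝ) : M3 := !![1,0,0; 0, Real.cos u, -Real.sin u; 0, Real.sin u, Real.cos u]
def rotY (u : ℝ) : M3 := !![Real.cos u, 0, Real.sin u; 0,1,0; -Real.sin u, 0, Real.cos u]
def rotZ (u : ℝ) : M3 := !![Real.cos u, -Real.sin u, 0; Real.sin u, Real.cos u, 0; 0,0,1]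

lemma rotX_mem (u : ℝ) : rotX u ∈ SO3 := by
  have h := Real.sin_sq_add_cos_sq u
  constructor
  · ext i j
    fin_cases i <;> fin_cases j <;>
      simp [rotX, Matrix.mul_apply, Fin.sum_univ_three, Matrix.one_apply,
        Matrix.transpose_apply, Matrix.vecHead, Matrix.vecTail] <;>
      nlinarith [h]
  · simp [rotX, Matrix.det_fin_three]; nlinarith [h]

lemma rotY_mem (u : ℝ) : rotY u ∈ SO3 := by
  have h := Real.sin_sq_add_cos_sq u
  constructor
  · ext i j
    fin_cases i <;> fin_cases j <;>
      simp [rotY, Matrix.mul_apply, Fin.sum_univ_three, Matrix.one_apply,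
        Matrix.transpose_apply, Matrix.vecHead, Matrix.vecTail] <;>
      nlinarith [h]
  · simp [rotY, Matrix.det_fin_three]; nlinarith [h]

lemma rotZ_mem (u : ℝ) : rotZ u ∈ SO3 := by
  have h := Real.sin_sq_add_cos_sq u
  constructor
  · ext i j
    fin_cases i <;> fin_cases j <;>
      simp [rotZ, Matrix.mul_apply, Fin.sum_univ_three, Matrix.one_apply,
        Matrix.transpose_apply, Matrix.vecHead, Matrix.vecTail] <;>
      nlinarith [h]
  · simp [rotZ, Matrix.det_fin_three]; nlinarith [h]

lemma trace_eq' (R : M3) : R.trace = R 0 0 + R 1 1 + R 2 2 := by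
  simp [Matrix.trace, Fin.sum_univ_three, Matrix.diag]

lemma trace_rotX (u : ℝ) (R : M3) :
    (rotX u * R).trace = R 0 0 + Real.cos u * (R 1 1 + R 2 2) + Real.sin u * (R 1 2 - R 2 1) := by
  simp [trace_eq', rotX, Matrix.mul_apply, Fin.sum_univ_three, Matrix.vecMul,
    dotProduct, Matrix.vecHead, Matrix.vecTail]
  ring

lemma trace_rotY (u : ℝ) (R : M3) :
    (rotY u * R).trace = R 1 1 + Real.cos u * (R 0 0 + R 2 2) + Real.sin u * (R 2 0 - R 0 2) := by
  simp [trace_eq', rotY, Matrix.mul_apply, Fin.sum_univ_three, Matrix.vecMul,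
    dotProduct, Matrix.vecHead, Matrix.vecTail]
  ring

lemma trace_rotZ (u : ℝ) (R : M3) :
    (rotZ u * R).trace = R 2 2 + Real.cos u * (R 0 0 + R 1 1) + Real.sin u * (R 0 1 - R 1 0) := by
  simp [trace_eq', rotZ, Matrix.mul_apply, Fin.sum_univ_three, Matrix.vecMul,
    dotProduct, Matrix.vecHead, Matrix.vecTail]
  ring

lemma ae_so3 {μ : Measure M3} (hsupp : μ SO3ᶜ = 0) : ∀ᵐ R ∂μ, R ∈ SO3 := by
  rw [ae_iff]
  simpa [Set.compl_def] using hsupp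

lemma integrable_of_so3_bound {μ : Measure M3} [IsProbabilityMeasure μ]
    (hsupp : μ SO3ᶜ = 0) {f : M3 → ℝ} (hf : Continuous f) (C : ℝ)
    (hC : ∀ R ∈ SO3, |f R| ≤ C) : Integrable f μ :=
  Integrable.mono' (integrable_const C) hf.aestronglyMeasurable
    ((ae_so3 hsupp).mono fun R hR => by simpa using hC R hR)

lemma axis_rec {μ : Measure M3} [IsProbabilityMeasure μ] (hsupp : μ SO3ᶜ = 0) (n : ℕ)
    (D B C : M3 → ℝ) (hD : Continuous D) (hB : Continuous B) (hC : Continuous C)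
    (hbD : ∀ R ∈ SO3, |D R| ≤ 3) (hbB : ∀ R ∈ SO3, |B R| ≤ 3) (hbC : ∀ R ∈ SO3, |C R| ≤ 3)
    (hconst : ∀ u : ℝ, ∫ R, (D R + Real.cos u * B R + Real.sin u * C R)^(n+2) ∂μ
            = ∫ R, (D R + B R)^(n+2) ∂μ) :
    ∫ R, (((n:ℝ)+2)*((n:ℝ)+1) * (D R + B R)^n * (C R)^2
        - ((n:ℝ)+2) * (D R + B R)^(n+1) * B R) ∂μ = 0 := by
  set φ : ℝ → M3 → ℝ := fun u R => D R + Real.cos u * B R + Real.sin u * C R with hφ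
  set φ' : ℝ → M3 → ℝ := fun u R => -Real.sin u * B R + Real.cos u * C R with hφ'
  have hφc : ∀ u, Continuous (φ u) := fun u =>
    (hD.add (continuous_const.mul hB)).add (continuous_const.mul hC)
  have hφ'c : ∀ u, Continuous (φ' u) := fun u =>
    (continuous_const.mul hB).add (continuous_const.mul hC)
  have hφb : ∀ u, ∀ R ∈ SO3, |φ u R| ≤ 9 := by
    intro u R hR
    have h1 := hbD R hR; have h2 := hbB R hR; have h3 := hbC R hR
    have hcu := abs_cos_le_one u; have hsu := abs_sin_le_one u
    have e1 : |Real.cos u * B R| ≤ 3 := by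
      rw [abs_mul]; nlinarith [abs_nonneg (B R), abs_nonneg (Real.cos u)]
    have e2 : |Real.sin u * C R| ≤ 3 := by
      rw [abs_mul]; nlinarith [abs_nonneg (C R), abs_nonneg (Real.sin u)]
    have := abs_add_le (D R + Real.cos u * B R) (Real.sin u * C R)
    have := abs_add_le (D R) (Real.cos u * B R)
    simp only [hφ]; linarith
  have hφ'b : ∀ u, ∀ R ∈ SO3, |φ' u R| ≤ 6 := by
    intro u R hR
    have h2 := hbB R hR; have h3 := hbC R hR
    have hcu := abs_cos_le_one u; have hsu := abs_sin_le_one u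
    have e1 : |(-Real.sin u) * B R| ≤ 3 := by
      rw [abs_mul, abs_neg]; nlinarith [abs_nonneg (B R), abs_nonneg (Real.sin u)]
    have e2 : |Real.cos u * C R| ≤ 3 := by
      rw [abs_mul]; nlinarith [abs_nonneg (C R), abs_nonneg (Real.cos u)]
    have := abs_add_le ((-Real.sin u) * B R) (Real.cos u * C R)
    simp only [hφ']; linarith
  -- derivative of φ in u
  have hdφ : ∀ u R, HasDerivAt (fun v => φ v R) (φ' u R) u := by
    intro u R
    have h1 : HasDerivAt (fun v : ℝ => Real.cos v * B R) (-Real.sin u * B R) u :=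
      (Real.hasDerivAt_cos u).mul_const (B R)
    have h2 : HasDerivAt (fun v : ℝ => Real.sin v * C R) (Real.cos u * C R) u :=
      (Real.hasDerivAt_sin u).mul_const (C R)
    refine (((hasDerivAt_const u (D R)).add h1).add h2).congr_deriv ?_
    show _ = -Real.sin u * B R + Real.cos u * C R; ring
  set φ'' : ℝ → M3 → ℝ := fun u R => -Real.cos u * B R + -Real.sin u * C R with hφ''
  have hφ''b : ∀ u, ∀ R ∈ SO3, |φ'' u R| ≤ 6 := by
    intro u R hR
    have h2 := hbB R hR; have h3 := hbC R hR
    have hcu := abs_cos_le_one u; have hsu := abs_sin_le_one u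
    have e1 : |(-Real.cos u) * B R| ≤ 3 := by
      rw [abs_mul, abs_neg]; nlinarith [abs_nonneg (B R), abs_nonneg (Real.cos u)]
    have e2 : |(-Real.sin u) * C R| ≤ 3 := by
      rw [abs_mul, abs_neg]; nlinarith [abs_nonneg (C R), abs_nonneg (Real.sin u)]
    have := abs_add_le ((-Real.cos u) * B R) ((-Real.sin u) * C R)
    simp only [hφ'']; linarith
  have hdφ' : ∀ u R, HasDerivAt (fun v => φ' v R) (φ'' u R) u := by
    intro u R
    have h1 : HasDerivAt (fun v : ℝ => -Real.sin v * B R) (-Real.cos u * B R) u := by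
      simpa using ((Real.hasDerivAt_sin u).neg.mul_const (B R))
    have h2 : HasDerivAt (fun v : ℝ => Real.cos v * C R) (-Real.sin u * C R) u :=
      (Real.hasDerivAt_cos u).mul_const (C R)
    refine (h1.add h2).congr_deriv ?_
    show _ = -Real.cos u * B R + -Real.sin u * C R; ring
  set F : ℝ → M3 → ℝ := fun u R => (φ u R)^(n+2) with hF
  set F1 : ℝ → M3 → ℝ := fun u R => ((n:ℝ)+2) * ((φ u R)^(n+1) * φ' u R) with hF1
  set F2 : ℝ → M3 → ℝ := fun u R =>
    ((n:ℝ)+2) * ((((n:ℝ)+1) * (φ u R)^n * φ' u R) * φ' u R + (φ u R)^(n+1) * φ'' u R) with hF2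
  have hdF : ∀ u R, HasDerivAt (fun v => F v R) (F1 u R) u := by
    intro u R
    have := (hdφ u R).pow (n+2)
    refine this.congr_deriv ?_
    simp only [hF1]; push_cast; ring_nf
  have hdF1 : ∀ u R, HasDerivAt (fun v => F1 v R) (F2 u R) u := by
    intro u R
    have hg : HasDerivAt (fun v => (φ v R)^(n+1)) ((((n:ℝ))+1) * (φ u R)^n * φ' u R) u := by
      have := (hdφ u R).pow (n+1)
      refine this.congr_deriv ?_
      push_cast; ring_nf
    have := (hg.mul (hdφ' u R)).const_mul ((n:ℝ)+2)
    exact this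
  -- bounds
  have pow_bound : ∀ (k : ℕ) u, ∀ R ∈ SO3, |(φ u R)^k| ≤ 9^k := by
    intro k u R hR
    rw [abs_pow]
    exact pow_le_pow_left₀ (abs_nonneg _) (hφb u R hR) k
  have hbF : ∀ u, ∀ R ∈ SO3, |F u R| ≤ 9^(n+2) := fun u R hR => pow_bound (n+2) u R hR
  have hbF1 : ∀ u, ∀ R ∈ SO3, |F1 u R| ≤ ((n:ℝ)+2) * (9^(n+1) * 6) := by
    intro u R hR
    simp only [hF1, abs_mul]
    have h0 : (0:ℝ) ≤ (n:ℝ)+2 := by positivity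
    rw [abs_of_nonneg h0]
    apply mul_le_mul_of_nonneg_left _ h0
    exact mul_le_mul (pow_bound (n+1) u R hR) (hφ'b u R hR) (abs_nonneg _) (by positivity)
  have hbF2 : ∀ u, ∀ R ∈ SO3, |F2 u R| ≤ ((n:ℝ)+2) * ((((n:ℝ)+1) * 9^n * 6) * 6 + 9^(n+1) * 6) := by
    intro u R hR
    simp only [hF2, abs_mul]
    have h0 : (0:ℝ) ≤ (n:ℝ)+2 := by positivity
    rw [abs_of_nonneg h0]
    apply mul_le_mul_of_nonneg_left _ h0
    refine (abs_add_le _ _).trans (add_le_add ?_ ?_)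
    · rw [abs_mul, abs_mul, abs_mul, abs_of_nonneg (by positivity : (0:ℝ) ≤ (n:ℝ)+1)]
      have b1 : |(φ u R)^n| ≤ 9^n := pow_bound n u R hR
      have b2 := hφ'b u R hR
      have bn : ((n:ℝ)+1) * |(φ u R)^n| ≤ ((n:ℝ)+1) * 9^n :=
        mul_le_mul_of_nonneg_left b1 (by positivity)
      exact mul_le_mul (mul_le_mul bn b2 (abs_nonneg _) (by positivity)) b2
        (abs_nonneg _) (by positivity)
    · rw [abs_mul]
      exact mul_le_mul (pow_bound (n+1) u R hR) (hφ''b u R hR) (abs_nonneg _) (by positivity)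
  -- continuity in R
  have hFc : ∀ u, Continuous (F u) := fun u => (hφc u).pow (n+2)
  have hF1c : ∀ u, Continuous (F1 u) :=
    fun u => continuous_const.mul (((hφc u).pow (n+1)).mul (hφ'c u))
  have hF2c : ∀ u, Continuous (F2 u) := by
    intro u
    have hφ''c : Continuous (φ'' u) := (continuous_const.mul hB).add (continuous_const.mul hC)
    exact continuous_const.mul
      ((((continuous_const.mul ((hφc u).pow n)).mul (hφ'c u)).mul (hφ'c u)).add
        (((hφc u).pow (n+1)).mul hφ''c))
  -- step 1
  have key1 : ∀ u₀ : ℝ, ∫ R, F1 u₀ R ∂μ = 0 := by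
    intro u₀
    have H := hasDerivAt_integral_of_dominated_loc_of_deriv_le (μ := μ)
      (F := F) (F' := F1) (x₀ := u₀) (bound := fun _ => ((n:ℝ)+2) * (9^(n+1) * 6))
      (Metric.ball_mem_nhds u₀ one_pos)
      (Filter.Eventually.of_forall fun u => (hFc u).aestronglyMeasurable)
      (integrable_of_so3_bound hsupp (hFc u₀) (9^(n+2)) (hbF u₀))
      ((hF1c u₀).aestronglyMeasurable)
      ((ae_so3 hsupp).mono fun R hR => fun x _ => by
        rw [Real.norm_eq_abs]; exact hbF1 x R hR)
      (integrable_const _)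
      (Filter.Eventually.of_forall fun R => fun x _ => hdF x R)
    have hEq : (fun u => ∫ R, F u R ∂μ) = fun _ => ∫ R, (D R + B R)^(n+2) ∂μ := by
      funext u; exact hconst u
    have h2 : HasDerivAt (fun u => ∫ R, F u R ∂μ) 0 u₀ := by
      rw [hEq]; exact hasDerivAt_const _ _
    exact H.2.unique h2
  -- step 2
  have key2 : ∫ R, F2 0 R ∂μ = 0 := by
    have H := hasDerivAt_integral_of_dominated_loc_of_deriv_le (μ := μ)
      (F := F1) (F' := F2) (x₀ := (0:ℝ))
      (bound := fun _ => ((n:ℝ)+2) * ((((n:ℝ)+1) * 9^n * 6) * 6 + 9^(n+1) * 6))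
      (Metric.ball_mem_nhds (0:ℝ) one_pos)
      (Filter.Eventually.of_forall fun u => (hF1c u).aestronglyMeasurable)
      (integrable_of_so3_bound hsupp (hF1c 0) _ (hbF1 0))
      ((hF2c 0).aestronglyMeasurable)
      ((ae_so3 hsupp).mono fun R hR => fun x _ => by
        rw [Real.norm_eq_abs]; exact hbF2 x R hR)
      (integrable_const _)
      (Filter.Eventually.of_forall fun R => fun x _ => hdF1 x R)
    have hEq : (fun u => ∫ R, F1 u R ∂μ) = fun _ => (0:ℝ) := by
      funext u; exact key1 u
    have h2 : HasDerivAt (fun u => ∫ R, F1 u R ∂μ) 0 0 := by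
      rw [hEq]; exact hasDerivAt_const _ _
    exact H.2.unique h2
  rw [← key2]
  congr 1
  funext R
  simp only [hF2, hφ, hφ', hφ'', Real.cos_zero, Real.sin_zero]
  ring

lemma cont_entry (i j : Fin 3) : Continuous (fun R : M3 => R i j) :=
  continuous_id.matrix_elem i j

lemma cont_trace : Continuous (fun R : M3 => R.trace) :=
  continuous_id.matrix_trace

lemma int_left {μ : Measure M3} (hleft : ∀ Q ∈ SO3, μ.map (fun R => Q * R) = μ)
    {Q : M3} (hQ : Q ∈ SO3) {f : M3 → ℝ} (hf : Continuous f) :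
    ∫ R, f (Q * R) ∂μ = ∫ R, f R ∂μ := by
  conv_rhs => rw [← hleft Q hQ]
  have hm : Continuous (fun R : M3 => Q * R) := continuous_const.matrix_mul continuous_id
  exact (integral_map hm.aemeasurable hf.aestronglyMeasurable).symm

-- bound helpers
lemma bmul {x y a b : ℝ} (hx : |x| ≤ a) (hy : |y| ≤ b) : |x * y| ≤ a * b := by
  rw [abs_mul]
  exact mul_le_mul hx hy (abs_nonneg _) ((abs_nonneg x).trans hx)

lemma bpow {x a : ℝ} (hx : |x| ≤ a) (k : ℕ) : |x ^ k| ≤ a ^ k := by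
  rw [abs_pow]
  exact pow_le_pow_left₀ (abs_nonneg _) hx k

def mom (μ : Measure M3) (n : ℕ) : ℝ := ∫ R, R.trace ^ n ∂μ

lemma trace_bd : ∀ R ∈ SO3, |R.trace| ≤ 3 := by
  intro R hR
  rw [trace_eq]
  have h0 := so3_entry_bound R hR 0 0
  have h1 := so3_entry_bound R hR 1 1
  have h2 := so3_entry_bound R hR 2 2
  have := abs_add_le (R 0 0 + R 1 1) (R 2 2)
  have := abs_add_le (R 0 0) (R 1 1)
  linarith

lemma integrable_T {μ : Measure M3} [IsProbabilityMeasure μ] (hsupp : μ SO3ᶜ = 0) (k : ℕ) :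
    Integrable (fun R => R.trace ^ k) μ :=
  integrable_of_so3_bound hsupp (cont_trace.pow k) (3^k) (fun R hR => bpow (trace_bd R hR) k)

lemma mom_zero (μ : Measure M3) [IsProbabilityMeasure μ] : mom μ 0 = 1 := by
  simp [mom]

lemma mom_one {μ : Measure M3} [IsProbabilityMeasure μ] (hsupp : μ SO3ᶜ = 0)
    (hleft : ∀ Q ∈ SO3, μ.map (fun R => Q * R) = μ) : mom μ 1 = 0 := by
  have iE : ∀ i : Fin 3, Integrable (fun R : M3 => R i i) μ := fun i =>
    integrable_of_so3_bound hsupp (cont_entry i i) 1 (fun R hR => so3_entry_bound R hR i i)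
  have htr : (fun R : M3 => R.trace) = fun R : M3 => R 0 0 + R 1 1 + R 2 2 :=
    funext trace_eq
  have hm1 : mom μ 1 = ∫ R, (R 0 0 + R 1 1 + R 2 2) ∂μ := by
    simp only [mom, pow_one, htr]
  have i01 : Integrable (fun R : M3 => R 0 0 + R 1 1) μ := (iE 0).add (iE 1)
  have s01 : Integrable (fun R : M3 => R 0 0 - R 1 1) μ := (iE 0).sub (iE 1)
  have s10 : Integrable (fun R : M3 => R 1 1 - R 0 0) μ := (iE 1).sub (iE 0)
  have s20 : Integrable (fun R : M3 => R 2 2 - R 0 0) μ := (iE 2).sub (iE 0)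
  have hsum : mom μ 1 = (∫ R, R 0 0 ∂μ) + (∫ R, R 1 1 ∂μ) + (∫ R, R 2 2 ∂μ) := by
    rw [hm1, integral_add i01 (iE 2), integral_add (iE 0) (iE 1)]
  have key : ∀ (D B : M3 → ℝ), Continuous D → Continuous B →
      (∀ u R, ((rotX u : M3) * R).trace = D R + Real.cos u * B R + Real.sin u * 0) → True := fun _ _ _ _ _ => trivial
  -- axis X: trace (rotX π * R) = R 0 0 - (R 1 1 + R 2 2)
  have eX : ∫ R, (R 0 0 - R 1 1 - R 2 2) ∂μ = mom μ 1 := by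
    have h := int_left hleft (rotX_mem Real.pi) cont_trace
    have h2 : (fun R : M3 => ((rotX Real.pi) * R).trace)
        = fun R : M3 => R 0 0 - R 1 1 - R 2 2 := by
      funext R
      rw [trace_rotX, Real.cos_pi, Real.sin_pi]; ring
    rw [h2] at h
    simpa [mom, htr] using h
  have eY : ∫ R, (R 1 1 - R 0 0 - R 2 2) ∂μ = mom μ 1 := by
    have h := int_left hleft (rotY_mem Real.pi) cont_trace
    have h2 : (fun R : M3 => ((rotY Real.pi) * R).trace)
        = fun R : M3 => R 1 1 - R 0 0 - R 2 2 := by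
      funext R
      rw [trace_rotY, Real.cos_pi, Real.sin_pi]; ring
    rw [h2] at h
    simpa [mom, htr] using h
  have eZ : ∫ R, (R 2 2 - R 0 0 - R 1 1) ∂μ = mom μ 1 := by
    have h := int_left hleft (rotZ_mem Real.pi) cont_trace
    have h2 : (fun R : M3 => ((rotZ Real.pi) * R).trace)
        = fun R : M3 => R 2 2 - R 0 0 - R 1 1 := by
      funext R
      rw [trace_rotZ, Real.cos_pi, Real.sin_pi]; ring
    rw [h2] at h
    simpa [mom, htr] using h
  have eX' : (∫ R, R 0 0 ∂μ) - (∫ R, R 1 1 ∂μ) - (∫ R, R 2 2 ∂μ) = mom μ 1 := by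
    rw [← integral_sub (iE 0) (iE 1), ← integral_sub s01 (iE 2)]; exact eX
  have eY' : (∫ R, R 1 1 ∂μ) - (∫ R, R 0 0 ∂μ) - (∫ R, R 2 2 ∂μ) = mom μ 1 := by
    rw [← integral_sub (iE 1) (iE 0), ← integral_sub s10 (iE 2)]; exact eY
  have eZ' : (∫ R, R 2 2 ∂μ) - (∫ R, R 0 0 ∂μ) - (∫ R, R 1 1 ∂μ) = mom μ 1 := by
    rw [← integral_sub (iE 2) (iE 0), ← integral_sub s20 (iE 1)]; exact eZ
  linarith [hsum, eX', eY', eZ']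

lemma babs_add_le {x y a b : ℝ} (hx : |x| ≤ a) (hy : |y| ≤ b) : |x + y| ≤ a + b :=
  (abs_add_le _ _).trans (add_le_add hx hy)

lemma babs_sub {x y a b : ℝ} (hx : |x| ≤ a) (hy : |y| ≤ b) : |x - y| ≤ a + b := by
  rw [sub_eq_add_neg]
  exact (abs_add_le _ _).trans (by rw [abs_neg]; exact add_le_add hx hy)

lemma axis_moment {μ : Measure M3} [IsProbabilityMeasure μ] (hsupp : μ SO3ᶜ = 0)
    (hleft : ∀ Q ∈ SO3, μ.map (fun R => Q * R) = μ) (n : ℕ)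
    (D B C : M3 → ℝ) (hDc : Continuous D) (hBc : Continuous B) (hCc : Continuous C)
    (hbD : ∀ R ∈ SO3, |D R| ≤ 3) (hbB : ∀ R ∈ SO3, |B R| ≤ 3) (hbC : ∀ R ∈ SO3, |C R| ≤ 3)
    (rot : ℝ → M3) (hrot : ∀ u, rot u ∈ SO3)
    (htr : ∀ u R, ((rot u) * R).trace = D R + Real.cos u * B R + Real.sin u * C R)
    (hDB : ∀ R : M3, D R + B R = R.trace) :
    ∫ R, (((n:ℝ)+2)*((n:ℝ)+1) * R.trace^n * (C R)^2
        - ((n:ℝ)+2) * R.trace^(n+1) * B R) ∂μ = 0 := by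
  have hconst : ∀ u, ∫ R, (D R + Real.cos u*B R + Real.sin u*C R)^(n+2) ∂μ
      = ∫ R, (D R + B R)^(n+2) ∂μ := by
    intro u
    have h1 : (fun R : M3 => (D R + Real.cos u*B R + Real.sin u*C R)^(n+2))
        = (fun R : M3 => ((fun S : M3 => S.trace^(n+2)) ((rot u) * R))) :=
      funext fun R => by rw [← htr]
    rw [h1, int_left hleft (hrot u) (f := fun S : M3 => S.trace^(n+2)) (cont_trace.pow (n+2))]
    congr 1; funext R; rw [hDB]
  have h := axis_rec hsupp n D B C hDc hBc hCc hbD hbB hbC hconst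
  have h2 : (fun R : M3 => (((n:ℝ)+2)*((n:ℝ)+1) * R.trace^n * (C R)^2
        - ((n:ℝ)+2) * R.trace^(n+1) * B R))
      = fun R => (((n:ℝ)+2)*((n:ℝ)+1) * (D R + B R)^n * (C R)^2
        - ((n:ℝ)+2) * (D R + B R)^(n+1) * B R) :=
    funext fun R => by rw [hDB]
  rw [h2]; exact h

lemma mom_rec {μ : Measure M3} [IsProbabilityMeasure μ] (hsupp : μ SO3ᶜ = 0)
    (hleft : ∀ Q ∈ SO3, μ.map (fun R => Q * R) = μ) (n : ℕ) :
    ((n:ℝ)+3) * mom μ (n+2) = ((n:ℝ)+1) * (3 * mom μ n + 2 * mom μ (n+1)) := by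
  set c2 : ℝ := ((n:ℝ)+2)*((n:ℝ)+1) with hc2
  set c1 : ℝ := ((n:ℝ)+2) with hc1
  have hc2nn : (0:ℝ) ≤ c2 := by positivity
  have hc1nn : (0:ℝ) ≤ c1 := by positivity
  -- the three axis functionals
  set fX : M3 → ℝ := fun R => c2 * R.trace^n * (R 1 2 - R 2 1)^2 - c1 * R.trace^(n+1) * (R 1 1 + R 2 2) with hfX
  set fY : M3 → ℝ := fun R => c2 * R.trace^n * (R 2 0 - R 0 2)^2 - c1 * R.trace^(n+1) * (R 0 0 + R 2 2) with hfY
  set fZ : M3 → ℝ := fun R => c2 * R.trace^n * (R 0 1 - R 1 0)^2 - c1 * R.trace^(n+1) * (R 0 0 + R 1 1) with hfZ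
  have eb : ∀ (i j : Fin 3) (R : M3), R ∈ SO3 → |R i j| ≤ 1 := fun i j R hR => so3_entry_bound R hR i j
  have hBb : ∀ (i j : Fin 3), ∀ R ∈ SO3, |R i i + R j j| ≤ 3 := by
    intro i j R hR
    have := babs_add_le (eb i i R hR) (eb j j R hR); linarith
  have hCb : ∀ (i j k l : Fin 3), ∀ R ∈ SO3, |R i j - R k l| ≤ 3 := by
    intro i j k l R hR
    have := babs_sub (eb i j R hR) (eb k l R hR); linarith
  have hDb : ∀ (i : Fin 3), ∀ R ∈ SO3, |R i i| ≤ 3 := by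
    intro i R hR; have := eb i i R hR; linarith
  have AX : ∫ R, fX R ∂μ = 0 := by
    have := axis_moment hsupp hleft n (fun R => R 0 0) (fun R => R 1 1 + R 2 2)
      (fun R => R 1 2 - R 2 1) (cont_entry 0 0) ((cont_entry 1 1).add (cont_entry 2 2))
      ((cont_entry 1 2).sub (cont_entry 2 1)) (hDb 0) (hBb 1 2) (hCb 1 2 2 1)
      rotX rotX_mem trace_rotX (fun R => by rw [trace_eq]; ring)
    simpa [hfX, hc2, hc1] using this
  have AY : ∫ R, fY R ∂μ = 0 := by
    have := axis_moment hsupp hleft n (fun R => R 1 1) (fun R => R 0 0 + R 2 2)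
      (fun R => R 2 0 - R 0 2) (cont_entry 1 1) ((cont_entry 0 0).add (cont_entry 2 2))
      ((cont_entry 2 0).sub (cont_entry 0 2)) (hDb 1) (hBb 0 2) (hCb 2 0 0 2)
      rotY rotY_mem trace_rotY (fun R => by rw [trace_eq]; ring)
    simpa [hfY, hc2, hc1] using this
  have AZ : ∫ R, fZ R ∂μ = 0 := by
    have := axis_moment hsupp hleft n (fun R => R 2 2) (fun R => R 0 0 + R 1 1)
      (fun R => R 0 1 - R 1 0) (cont_entry 2 2) ((cont_entry 0 0).add (cont_entry 1 1))
      ((cont_entry 0 1).sub (cont_entry 1 0)) (hDb 2) (hBb 0 1) (hCb 0 1 1 0)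
      rotZ rotZ_mem trace_rotZ (fun R => by rw [trace_eq]; ring)
    simpa [hfZ, hc2, hc1] using this
  -- integrability
  have fb : ∀ (T Cd Bs : ℝ), |T| ≤ 3 → |Cd| ≤ 3 → |Bs| ≤ 3 →
      |c2*T^n*Cd^2 - c1*T^(n+1)*Bs| ≤ c2 * 3^n * 9 + c1 * 3^(n+1) * 3 := by
    intro T Cd Bs hT hC hB
    have t1 : |c2*T^n*Cd^2| ≤ c2*3^n*9 :=
      bmul (bmul (le_of_eq (abs_of_nonneg hc2nn)) (bpow hT n))
        ((bpow hC 2).trans (by norm_num))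
    have t2 : |c1*T^(n+1)*Bs| ≤ c1*3^(n+1)*3 :=
      bmul (bmul (le_of_eq (abs_of_nonneg hc1nn)) (bpow hT (n+1))) hB
    exact babs_sub t1 t2
  have contf : ∀ (i j k l a b : Fin 3),
      Continuous (fun R : M3 => c2 * R.trace^n * (R i j - R k l)^2
        - c1 * R.trace^(n+1) * (R a a + R b b)) := by
    intro i j k l a b
    exact ((continuous_const.mul (cont_trace.pow n)).mul
      (((cont_entry i j).sub (cont_entry k l)).pow 2)).sub
      ((continuous_const.mul (cont_trace.pow (n+1))).mul
        ((cont_entry a a).add (cont_entry b b)))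
  have iX : Integrable fX μ :=
    integrable_of_so3_bound hsupp (contf 1 2 2 1 1 2) _
      (fun R hR => fb _ _ _ (trace_bd R hR) (hCb 1 2 2 1 R hR) (hBb 1 2 R hR))
  have iY : Integrable fY μ :=
    integrable_of_so3_bound hsupp (contf 2 0 0 2 0 2) _
      (fun R hR => fb _ _ _ (trace_bd R hR) (hCb 2 0 0 2 R hR) (hBb 0 2 R hR))
  have iZ : Integrable fZ μ :=
    integrable_of_so3_bound hsupp (contf 0 1 1 0 0 1) _
      (fun R hR => fb _ _ _ (trace_bd R hR) (hCb 0 1 1 0 R hR) (hBb 0 1 R hR))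
  have iT : ∀ k, Integrable (fun R : M3 => R.trace ^ k) μ := integrable_T hsupp
  -- sum of the three equations
  have iXY : Integrable (fun R => fX R + fY R) μ := iX.add iY
  have hsum0 : ∫ R, (fX R + fY R + fZ R) ∂μ = 0 := by
    rw [integral_add iXY iZ, integral_add iX iY, AX, AY, AZ]; ring
  -- pointwise identity on SO3
  have hae : (fun R => fX R + fY R + fZ R)
      =ᵐ[μ] fun R : M3 => 3*c2 * R.trace^n + 2*c2 * R.trace^(n+1) - (c2 + 2*c1) * R.trace^(n+2) := by
    refine (ae_so3 hsupp).mono fun R hR => ?_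
    have key := so3_key R hR
    have htr := trace_eq R
    simp only [hfX, hfY, hfZ]
    linear_combination (c2 * R.trace^n) * key + (2*c1*(R.trace^n * R.trace)) * htr
  have hint : ∫ R, (fX R + fY R + fZ R) ∂μ
      = ∫ R, (3*c2 * R.trace^n + 2*c2 * R.trace^(n+1) - (c2 + 2*c1) * R.trace^(n+2)) ∂μ :=
    integral_congr_ae hae
  have lin : ∫ R, (3*c2 * R.trace^n + 2*c2 * R.trace^(n+1) - (c2 + 2*c1) * R.trace^(n+2)) ∂μ
      = 3*c2 * mom μ n + 2*c2 * mom μ (n+1) - (c2 + 2*c1) * mom μ (n+2) := by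
    have i1 : Integrable (fun R : M3 => 3*c2 * R.trace^n) μ := (iT n).const_mul _
    have i2 : Integrable (fun R : M3 => 2*c2 * R.trace^(n+1)) μ := (iT (n+1)).const_mul _
    have i3 : Integrable (fun R : M3 => (c2 + 2*c1) * R.trace^(n+2)) μ := (iT (n+2)).const_mul _
    have i12 : Integrable (fun R : M3 => 3*c2 * R.trace^n + 2*c2 * R.trace^(n+1)) μ := i1.add i2
    rw [integral_sub i12 i3, integral_add i1 i2, integral_const_mul,
      integral_const_mul, integral_const_mul]
    simp only [mom]
  have main0 : 3*c2 * mom μ n + 2*c2 * mom μ (n+1) - (c2 + 2*c1) * mom μ (n+2) = 0 := by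
    rw [← lin, ← hint, hsum0]
  have hne : ((n:ℝ)+2) ≠ 0 := by positivity
  have hmul : ((n:ℝ)+2) * (((n:ℝ)+3) * mom μ (n+2))
      = ((n:ℝ)+2) * (((n:ℝ)+1) * (3 * mom μ n + 2 * mom μ (n+1))) := by
    simp only [hc2, hc1] at main0
    ring_nf
    ring_nf at main0
    linarith
  exact mul_left_cancel₀ hne hmul

def momI (n : ℕ) : ℝ :=
  (1/Real.pi) * ∫ ρ in (0:ℝ)..Real.pi, (1+2*Real.cos ρ)^n * (1 - Real.cos ρ)

lemma contg (n : ℕ) : Continuous (fun ρ : ℝ => (1+2*Real.cos ρ)^n * (1 - Real.cos ρ)) :=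
  ((continuous_const.add (continuous_const.mul Real.continuous_cos)).pow n).mul
    (continuous_const.sub Real.continuous_cos)

lemma momI_zero : momI 0 = 1 := by
  have h : ∫ ρ in (0:ℝ)..Real.pi, (1 - Real.cos ρ) = Real.pi := by
    rw [intervalIntegral.integral_sub intervalIntegrable_const
      (Real.continuous_cos.intervalIntegrable _ _)]
    simp [integral_cos]
  have h2 : (fun ρ : ℝ => (1+2*Real.cos ρ)^0 * (1 - Real.cos ρ))
      = fun ρ : ℝ => 1 - Real.cos ρ := by funext ρ; ring
  rw [momI, h2, h]
  field_simp

lemma momI_one : momI 1 = 0 := by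
  have h2 : (fun ρ : ℝ => (1+2*Real.cos ρ)^1 * (1 - Real.cos ρ))
      = fun ρ : ℝ => (1 + Real.cos ρ) - 2 * Real.cos ρ^2 := by funext ρ; ring
  have i1 : IntervalIntegrable (fun ρ : ℝ => 1 + Real.cos ρ) MeasureTheory.volume 0 Real.pi :=
    (continuous_const.add Real.continuous_cos).intervalIntegrable _ _
  have i2 : IntervalIntegrable (fun ρ : ℝ => 2 * Real.cos ρ^2) MeasureTheory.volume 0 Real.pi :=
    (continuous_const.mul (Real.continuous_cos.pow 2)).intervalIntegrable _ _
  have h : ∫ ρ in (0:ℝ)..Real.pi, ((1 + Real.cos ρ) - 2 * Real.cos ρ^2) = 0 := by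
    rw [intervalIntegral.integral_sub i1 i2,
      intervalIntegral.integral_add intervalIntegrable_const
        (Real.continuous_cos.intervalIntegrable _ _),
      intervalIntegral.integral_const_mul, integral_cos_sq]
    simp [integral_cos]
    ring
  rw [momI, h2, h, mul_zero]

lemma momI_rec (n : ℕ) :
    ((n:ℝ)+3) * momI (n+2) = ((n:ℝ)+1) * (3 * momI n + 2 * momI (n+1)) := by
  set F : ℝ → ℝ := fun ρ => Real.sin ρ * (1 - Real.cos ρ) * (1+2*Real.cos ρ)^(n+1) with hF
  set F' : ℝ → ℝ := fun ρ =>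
    (Real.cos ρ * (1 - Real.cos ρ) + Real.sin ρ * Real.sin ρ) * (1+2*Real.cos ρ)^(n+1)
    + (Real.sin ρ * (1 - Real.cos ρ)) * (((n:ℝ)+1) * (1+2*Real.cos ρ)^n * (-(2 * Real.sin ρ))) with hF'
  have hder : ∀ ρ, HasDerivAt F (F' ρ) ρ := by
    intro ρ
    have h1 : HasDerivAt Real.sin (Real.cos ρ) ρ := Real.hasDerivAt_sin ρ
    have h2 : HasDerivAt (fun x : ℝ => 1 - Real.cos x) (Real.sin ρ) ρ := by
      simpa using (Real.hasDerivAt_cos ρ).const_sub 1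
    have h3 : HasDerivAt (fun x : ℝ => 1 + 2*Real.cos x) (-(2 * Real.sin ρ)) ρ := by
      simpa [mul_comm] using ((Real.hasDerivAt_cos ρ).const_mul 2).const_add 1
    have h4 : HasDerivAt (fun x : ℝ => (1 + 2*Real.cos x)^(n+1))
        (((n:ℝ)+1) * (1+2*Real.cos ρ)^n * (-(2 * Real.sin ρ))) ρ := by
      have := h3.pow (n+1)
      refine this.congr_deriv ?_
      push_cast; ring_nf
    have := (h1.mul h2).mul h4
    exact this
  have hcontF' : Continuous F' := by
    apply Continuous.add
    · exact ((Real.continuous_cos.mul (continuous_const.sub Real.continuous_cos)).add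
        (Real.continuous_sin.mul Real.continuous_sin)).mul
        ((continuous_const.add (continuous_const.mul Real.continuous_cos)).pow (n+1))
    · exact (Real.continuous_sin.mul (continuous_const.sub Real.continuous_cos)).mul
        ((continuous_const.mul ((continuous_const.add
          (continuous_const.mul Real.continuous_cos)).pow n)).mul
          (continuous_const.mul Real.continuous_sin).neg)
  have hint : ∫ ρ in (0:ℝ)..Real.pi, F' ρ = 0 := by
    rw [intervalIntegral.integral_eq_sub_of_hasDerivAt (fun ρ _ => hder ρ)
      (hcontF'.intervalIntegrable _ _)]
    simp [hF, Real.sin_pi]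
  -- rewrite integrand
  have hptw : ∀ ρ : ℝ, F' ρ =
      (((n:ℝ)+3)/2) * ((1+2*Real.cos ρ)^(n+2) * (1 - Real.cos ρ))
      - (((n:ℝ)+1)) * ((1+2*Real.cos ρ)^(n+1) * (1 - Real.cos ρ))
      - (3*((n:ℝ)+1)/2) * ((1+2*Real.cos ρ)^n * (1 - Real.cos ρ)) := by
    intro ρ
    have hsc := Real.sin_sq_add_cos_sq ρ
    simp only [hF']
    linear_combination ((1+2*Real.cos ρ)^(n+1) - 2*((n:ℝ)+1)*(1-Real.cos ρ)*(1+2*Real.cos ρ)^n) * hsc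
  have hir : ∀ k : ℕ, IntervalIntegrable
      (fun ρ : ℝ => (1+2*Real.cos ρ)^k * (1 - Real.cos ρ)) MeasureTheory.volume 0 Real.pi :=
    fun k => (contg k).intervalIntegrable _ _
  have hlin : ∫ ρ in (0:ℝ)..Real.pi, F' ρ =
      (((n:ℝ)+3)/2) * (∫ ρ in (0:ℝ)..Real.pi, (1+2*Real.cos ρ)^(n+2) * (1 - Real.cos ρ))
      - (((n:ℝ)+1)) * (∫ ρ in (0:ℝ)..Real.pi, (1+2*Real.cos ρ)^(n+1) * (1 - Real.cos ρ))
      - (3*((n:ℝ)+1)/2) * (∫ ρ in (0:ℝ)..Real.pi, (1+2*Real.cos ρ)^n * (1 - Real.cos ρ)) := by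
    have e : F' = fun ρ =>
      ((((n:ℝ)+3)/2) * ((1+2*Real.cos ρ)^(n+2) * (1 - Real.cos ρ))
      - (((n:ℝ)+1)) * ((1+2*Real.cos ρ)^(n+1) * (1 - Real.cos ρ)))
      - (3*((n:ℝ)+1)/2) * ((1+2*Real.cos ρ)^n * (1 - Real.cos ρ)) := by
      funext ρ; rw [hptw ρ]
    rw [e]
    have ia : IntervalIntegrable (fun ρ : ℝ =>
        (((n:ℝ)+3)/2) * ((1+2*Real.cos ρ)^(n+2) * (1 - Real.cos ρ))) MeasureTheory.volume 0 Real.pi :=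
      (continuous_const.mul (contg (n+2))).intervalIntegrable _ _
    have ib : IntervalIntegrable (fun ρ : ℝ =>
        (((n:ℝ)+1)) * ((1+2*Real.cos ρ)^(n+1) * (1 - Real.cos ρ))) MeasureTheory.volume 0 Real.pi :=
      (continuous_const.mul (contg (n+1))).intervalIntegrable _ _
    have ic : IntervalIntegrable (fun ρ : ℝ =>
        (3*((n:ℝ)+1)/2) * ((1+2*Real.cos ρ)^n * (1 - Real.cos ρ))) MeasureTheory.volume 0 Real.pi :=
      (continuous_const.mul (contg n)).intervalIntegrable _ _
    rw [intervalIntegral.integral_sub (ia.sub ib) ic, intervalIntegral.integral_sub ia ib,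
      intervalIntegral.integral_const_mul, intervalIntegral.integral_const_mul,
      intervalIntegral.integral_const_mul]
  have hpi : Real.pi ≠ 0 := Real.pi_ne_zero
  have heq := hint
  rw [hlin] at heq
  simp only [momI]
  field_simp
  nlinarith [heq]

lemma mom_eq_momI {μ : Measure M3} [IsProbabilityMeasure μ] (hsupp : μ SO3ᶜ = 0)
    (hleft : ∀ Q ∈ SO3, μ.map (fun R => Q * R) = μ) (n : ℕ) : mom μ n = momI n := by
  have P : ∀ k, mom μ k = momI k ∧ mom μ (k+1) = momI (k+1) := by
    intro k
    induction k with
    | zero => exact ⟨by rw [mom_zero, momI_zero], by rw [mom_one hsupp hleft, momI_one]⟩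
    | succ m ih =>
      refine ⟨ih.2, ?_⟩
      have h1 := mom_rec hsupp hleft m
      have h2 := momI_rec m
      have hne : ((m:ℝ)+3) ≠ 0 := by positivity
      rw [ih.1, ih.2, ← h2] at h1
      exact mul_left_cancel₀ hne h1
  exact (P n).1

lemma series_mu {μ : Measure M3} [IsProbabilityMeasure μ] (hsupp : μ SO3ᶜ = 0) (s : ℝ) :
    ∫ R, Real.exp (s * R.trace) ∂μ = ∑' n : ℕ, s^n / n.factorial * mom μ n := by
  have hpt : (fun R : M3 => Real.exp (s * R.trace))
      = fun R : M3 => ∑' n : ℕ, (s * R.trace)^n / n.factorial := by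
    funext R
    rw [Real.exp_eq_exp_ℝ, NormedSpace.exp_eq_tsum_div]
  rw [hpt]
  have hcont : ∀ n : ℕ, Continuous (fun R : M3 => (s * R.trace)^n / (n.factorial : ℝ)) :=
    fun n => ((continuous_const.mul cont_trace).pow n).div_const _
  have hbd : ∀ n : ℕ, ∀ R ∈ SO3, |(s * R.trace)^n / (n.factorial : ℝ)|
      ≤ (3*|s|)^n / (n.factorial : ℝ) := by
    intro n R hR
    have h1 : |s * R.trace| ≤ 3*|s| := by
      rw [abs_mul]
      have := trace_bd R hR
      nlinarith [abs_nonneg s]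
    have h2 := bpow h1 n
    rw [abs_div, abs_of_nonneg (by positivity : (0:ℝ) ≤ (n.factorial : ℝ))]
    gcongr
  have hsummable : Summable (fun n : ℕ => (3*|s|)^n / (n.factorial : ℝ)) :=
    Real.summable_pow_div_factorial _
  have hnn : ∀ n : ℕ, (0:ℝ) ≤ (3*|s|)^n / (n.factorial : ℝ) := by
    intro n; positivity
  rw [integral_tsum (fun n => (hcont n).aestronglyMeasurable) ?_]
  · congr 1
    funext n
    have e : (fun R : M3 => (s * R.trace)^n / (n.factorial : ℝ))
        = fun R : M3 => (s^n / (n.factorial : ℝ)) * R.trace^n := by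
      funext R; rw [mul_pow]; ring
    rw [e, integral_const_mul]
    rfl
  · -- finiteness
    have hb : ∀ n : ℕ, ∫⁻ R, (‖(s * R.trace)^n / (n.factorial : ℝ)‖₊ : ENNReal) ∂μ
        ≤ ENNReal.ofReal ((3*|s|)^n / (n.factorial : ℝ)) := by
      intro n
      have : ∀ᵐ R ∂μ, (‖(s * R.trace)^n / (n.factorial : ℝ)‖₊ : ENNReal)
          ≤ ENNReal.ofReal ((3*|s|)^n / (n.factorial : ℝ)) := by
        refine (ae_so3 hsupp).mono fun R hR => ?_
        refine (Real.enorm_eq_ofReal_abs _).trans_le ?_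
        exact ENNReal.ofReal_le_ofReal (hbd n R hR)
      calc ∫⁻ R, (‖(s * R.trace)^n / (n.factorial : ℝ)‖₊ : ENNReal) ∂μ
          ≤ ∫⁻ _, ENNReal.ofReal ((3*|s|)^n / (n.factorial : ℝ)) ∂μ := lintegral_mono_ae this
        _ = ENNReal.ofReal ((3*|s|)^n / (n.factorial : ℝ)) := by
            rw [lintegral_const, measure_univ, mul_one]
    have hlt : (∑' n : ℕ, ∫⁻ R, (‖(s * R.trace)^n / (n.factorial : ℝ)‖₊ : ENNReal) ∂μ) < ⊤ :=
      calc ∑' n : ℕ, ∫⁻ R, (‖(s * R.trace)^n / (n.factorial : ℝ)‖₊ : ENNReal) ∂μ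
          ≤ ∑' n : ℕ, ENNReal.ofReal ((3*|s|)^n / (n.factorial : ℝ)) := ENNReal.tsum_le_tsum hb
        _ = ENNReal.ofReal (∑' n : ℕ, (3*|s|)^n / (n.factorial : ℝ)) :=
            (ENNReal.ofReal_tsum_of_nonneg hnn hsummable).symm
        _ < ⊤ := ENNReal.ofReal_lt_top
    exact hlt.ne

lemma series_I (s : ℝ) :
    (1/Real.pi) * ∫ ρ in (0:ℝ)..Real.pi, Real.exp (s*(1+2*Real.cos ρ)) * (1 - Real.cos ρ)
    = ∑' n : ℕ, s^n / n.factorial * momI n := by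
  have hpi := Real.pi_pos
  have hpt : (fun ρ : ℝ => Real.exp (s*(1+2*Real.cos ρ)) * (1 - Real.cos ρ))
      = fun ρ : ℝ => ∑' n : ℕ, (s*(1+2*Real.cos ρ))^n / n.factorial * (1 - Real.cos ρ) := by
    funext ρ
    rw [Real.exp_eq_exp_ℝ, NormedSpace.exp_eq_tsum_div, tsum_mul_right]
  have hcont : ∀ n : ℕ, Continuous
      (fun ρ : ℝ => (s*(1+2*Real.cos ρ))^n / (n.factorial:ℝ) * (1 - Real.cos ρ)) := by
    intro n
    exact (((continuous_const.mul (continuous_const.add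
      (continuous_const.mul Real.continuous_cos))).pow n).div_const _).mul
      (continuous_const.sub Real.continuous_cos)
  have hbd : ∀ (n : ℕ) (ρ : ℝ), |(s*(1+2*Real.cos ρ))^n / (n.factorial:ℝ) * (1 - Real.cos ρ)|
      ≤ (3*|s|)^n / (n.factorial:ℝ) * 2 := by
    intro n ρ
    have hc := Real.abs_cos_le_one ρ
    have h1 : |s*(1+2*Real.cos ρ)| ≤ 3*|s| := by
      rw [abs_mul]
      have h2 : |1+2*Real.cos ρ| ≤ 3 := by
        have := abs_add_le (1:ℝ) (2*Real.cos ρ)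
        rw [abs_mul] at this
        simp at this
        nlinarith
      nlinarith [abs_nonneg s]
    have h3 : |(s*(1+2*Real.cos ρ))^n / (n.factorial:ℝ)| ≤ (3*|s|)^n / (n.factorial:ℝ) := by
      rw [abs_div, abs_of_nonneg (by positivity : (0:ℝ) ≤ (n.factorial : ℝ))]
      gcongr
      exact bpow h1 n
    have h4 : |1 - Real.cos ρ| ≤ 2 := by
      have := babs_sub (le_refl |(1:ℝ)|) hc
      simp at this
      linarith
    exact bmul h3 h4
  rw [hpt, intervalIntegral.integral_of_le hpi.le]
  rw [integral_tsum (fun n => (hcont n).aestronglyMeasurable.restrict) ?_]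
  · rw [← tsum_mul_left]
    congr 1
    funext n
    rw [← intervalIntegral.integral_of_le hpi.le]
    have e : (fun ρ : ℝ => (s*(1+2*Real.cos ρ))^n / (n.factorial:ℝ) * (1 - Real.cos ρ))
        = fun ρ : ℝ => (s^n / (n.factorial:ℝ)) * ((1+2*Real.cos ρ)^n * (1 - Real.cos ρ)) := by
      funext ρ; rw [mul_pow]; ring
    rw [e, intervalIntegral.integral_const_mul]
    rw [momI]
    ring
  · have hb : ∀ n : ℕ, ∫⁻ ρ in Set.Ioc (0:ℝ) Real.pi,
        (‖(s*(1+2*Real.cos ρ))^n / (n.factorial:ℝ) * (1 - Real.cos ρ)‖₊ : ENNReal) ∂volume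
        ≤ ENNReal.ofReal ((3*|s|)^n / (n.factorial:ℝ) * 2) * ENNReal.ofReal Real.pi := by
      intro n
      calc ∫⁻ ρ in Set.Ioc (0:ℝ) Real.pi,
          (‖(s*(1+2*Real.cos ρ))^n / (n.factorial:ℝ) * (1 - Real.cos ρ)‖₊ : ENNReal) ∂volume
          ≤ ∫⁻ _ in Set.Ioc (0:ℝ) Real.pi,
            ENNReal.ofReal ((3*|s|)^n / (n.factorial:ℝ) * 2) ∂volume := by
            apply lintegral_mono_ae
            filter_upwards with ρ
            refine (Real.enorm_eq_ofReal_abs _).trans_le ?_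
            exact ENNReal.ofReal_le_ofReal (hbd n ρ)
        _ = ENNReal.ofReal ((3*|s|)^n / (n.factorial:ℝ) * 2) * ENNReal.ofReal Real.pi := by
            rw [lintegral_const, Measure.restrict_apply MeasurableSet.univ, Set.univ_inter,
              Real.volume_Ioc]
            simp
    have hsummable : Summable (fun n : ℕ => (3*|s|)^n / (n.factorial:ℝ) * 2) :=
      (Real.summable_pow_div_factorial _).mul_right 2
    have hnn : ∀ n : ℕ, (0:ℝ) ≤ (3*|s|)^n / (n.factorial:ℝ) * 2 := fun n => by positivity
    have hlt : (∑' n : ℕ, ∫⁻ ρ in Set.Ioc (0:ℝ) Real.pi,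
        (‖(s*(1+2*Real.cos ρ))^n / (n.factorial:ℝ) * (1 - Real.cos ρ)‖₊ : ENNReal) ∂volume) < ⊤ :=
      calc _ ≤ ∑' n : ℕ, ENNReal.ofReal ((3*|s|)^n / (n.factorial:ℝ) * 2) * ENNReal.ofReal Real.pi :=
            ENNReal.tsum_le_tsum hb
        _ = (∑' n : ℕ, ENNReal.ofReal ((3*|s|)^n / (n.factorial:ℝ) * 2)) * ENNReal.ofReal Real.pi :=
            ENNReal.tsum_mul_right
        _ = ENNReal.ofReal (∑' n : ℕ, (3*|s|)^n / (n.factorial:ℝ) * 2) * ENNReal.ofReal Real.pi := by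
            rw [ENNReal.ofReal_tsum_of_nonneg hnn hsummable]
        _ < ⊤ := ENNReal.mul_lt_top ENNReal.ofReal_lt_top ENNReal.ofReal_lt_top
    exact hlt.ne

lemma key_integral {μ : Measure M3} [IsProbabilityMeasure μ] (hsupp : μ SO3ᶜ = 0)
    (hleft : ∀ Q ∈ SO3, μ.map (fun R => Q * R) = μ) (s : ℝ) :
    ∫ R, Real.exp (s * R.trace) ∂μ
    = (1/Real.pi) * ∫ ρ in (0:ℝ)..Real.pi, Real.exp (s*(1+2*Real.cos ρ)) * (1 - Real.cos ρ) := by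
  rw [series_mu hsupp s, series_I s]
  congr 1
  funext n
  rw [mom_eq_momI hsupp hleft n]

/-- For every `s ≥ 0`, the normalizing constant of the matrix
Fisher distribution with parameter `sI₃` is
`c(sI₃) = ∫_{SO(3)} exp(s·tr R) dR = (e^s/π)·∫₀^π exp(2s cos ρ)(1 − cos ρ) dρ`;
equivalently, `c(sI₃) = e^s (I₀(2s) − I₁(2s))`. -/
theorem matrixFisher_normalizing_isotropic
    (μ : Measure M3) [IsProbabilityMeasure μ] (hsupp : μ SO3ᶜ = 0)
    (hleft : ∀ Q ∈ SO3, μ.map (fun R => Q * R) = μ)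
    (hright : ∀ Q ∈ SO3, μ.map (fun R => R * Q) = μ)
    (s : ℝ) (hs : 0 ≤ s) :
    mfC μ (s • (1 : M3)) = ∫ R, Real.exp (s * R.trace) ∂μ ∧
    mfC μ (s • (1 : M3)) =
      (Real.exp s / Real.pi) *
        ∫ ρ in (0:ℝ)..Real.pi, Real.exp (2 * s * Real.cos ρ) * (1 - Real.cos ρ) ∧
    mfC μ (s • (1 : M3)) = Real.exp s * (besselI0 (2 * s) - besselI1 (2 * s)) := by
  have h1 : mfC μ (s • (1 : M3)) = ∫ R, Real.exp (s * R.trace) ∂μ := by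
    unfold mfC
    congr 1
    funext R
    congr 1
    rw [Matrix.transpose_smul, Matrix.transpose_one, Matrix.smul_mul, one_mul,
      Matrix.trace_smul, smul_eq_mul]
  have h2 : mfC μ (s • (1 : M3)) =
      (Real.exp s / Real.pi) *
        ∫ ρ in (0:ℝ)..Real.pi, Real.exp (2 * s * Real.cos ρ) * (1 - Real.cos ρ) := by
    rw [h1, key_integral hsupp hleft s]
    have e : (fun ρ : ℝ => Real.exp (s*(1+2*Real.cos ρ)) * (1 - Real.cos ρ))
        = fun ρ : ℝ => Real.exp s * (Real.exp (2*s*Real.cos ρ) * (1 - Real.cos ρ)) := by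
      funext ρ
      rw [show s*(1+2*Real.cos ρ) = s + 2*s*Real.cos ρ by ring, Real.exp_add]
      ring
    rw [e, intervalIntegral.integral_const_mul]
    ring
  refine ⟨h1, h2, ?_⟩
  rw [h2, besselI0, besselI1]
  have i1 : IntervalIntegrable (fun θ : ℝ => Real.exp (2*s*Real.cos θ))
      MeasureTheory.volume 0 Real.pi :=
    ((continuous_const.mul Real.continuous_cos).rexp).intervalIntegrable _ _
  have i2 : IntervalIntegrable (fun θ : ℝ => Real.cos θ * Real.exp (2*s*Real.cos θ))
      MeasureTheory.volume 0 Real.pi :=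
    (Real.continuous_cos.mul ((continuous_const.mul Real.continuous_cos).rexp)).intervalIntegrable _ _
  have e2 : ∫ θ in (0:ℝ)..Real.pi, Real.exp (2*s*Real.cos θ) * (1 - Real.cos θ)
      = (∫ θ in (0:ℝ)..Real.pi, Real.exp (2*s*Real.cos θ))
        - ∫ θ in (0:ℝ)..Real.pi, Real.cos θ * Real.exp (2*s*Real.cos θ) := by
    rw [← intervalIntegral.integral_sub i1 i2]
    congr 1
    funext θ
    ring
  rw [e2]
  ring

end
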